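/- Let L be the free Lie algebra over a field k on generators x₁, y₁, ..., xₙ, yₙ modulo the single relation [x₁,y₁] + [x₂,y₂] + ... + [xₙ,yₙ] = 0, with n ≥ 2 (the associated graded Lie algebra of a genus-n surface group). Then L is not isomorphic to the free product of a 2-dimensional abelian Lie algebra and a free Lie algebra. -/

import Mathlib

/-- The Lie algebra `⟨x₁,y₁,…,xₙ,yₙ ∣ [x₁,y₁]+⋯+[xₙ,yₙ]⟩`: the associated graded Lie
algebra of a genus-`n` surface group. Here `(i, 0)` plays the role of `xᵢ` and
`(i, 1)` that of `yᵢ`. -/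
noncomputable def surfaceLie (k : Type) [Field k] (n : ℕ) : Type :=
  FreeLieAlgebra k (Fin n × Fin 2) ⧸
    LieSubmodule.lieSpan k (FreeLieAlgebra k (Fin n × Fin 2))
      ({∑ i : Fin n, ⁅FreeLieAlgebra.of k (i, (0 : Fin 2)),
          FreeLieAlgebra.of k (i, (1 : Fin 2))⁆} : Set (FreeLieAlgebra k (Fin n × Fin 2)))

noncomputable instance (k : Type) [Field k] (n : ℕ) : LieRing (surfaceLie k n) := by
  unfold surfaceLie; infer_instance

noncomputable instance (k : Type) [Field k] (n : ℕ) : LieAlgebra k (surfaceLie k n) := by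
  unfold surfaceLie; infer_instance

/-- The free product of the 2-dimensional abelian Lie algebra (on `Sum.inl true`,
`Sum.inl false`) with the free Lie algebra on `X`, presented as
`⟨a, b, X ∣ [a,b]⟩`. -/
noncomputable def abelianFreeProd (k : Type) [Field k] (X : Type) : Type :=
  FreeLieAlgebra k (Bool ⊕ X) ⧸
    LieSubmodule.lieSpan k (FreeLieAlgebra k (Bool ⊕ X))
      ({⁅(FreeLieAlgebra.of k (Sum.inl true) : FreeLieAlgebra k (Bool ⊕ X)), FreeLieAlgebra.of k (Sum.inl false)⁆} :
        Set (FreeLieAlgebra k (Bool ⊕ X)))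

noncomputable instance (k : Type) [Field k] (X : Type) : LieRing (abelianFreeProd k X) := by
  unfold abelianFreeProd; infer_instance

noncomputable instance (k : Type) [Field k] (X : Type) : LieAlgebra k (abelianFreeProd k X) := by
  unfold abelianFreeProd; infer_instance

section AssocLie
attribute [local instance] LieRing.ofAssociativeRing

namespace Stmt12
variable {k : Type} [Field k]

section Quot
variable {L M : Type} [LieRing L] [LieAlgebra k L] [LieRing M] [LieAlgebra k M]

/-- Quotient map as a Lie algebra hom. -/
def qmk (I : LieIdeal k L) : L →ₗ⁅k⁆ L ⧸ I where
  toFun := LieSubmodule.Quotient.mk (N := I)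
  map_add' _ _ := rfl
  map_smul' _ _ := rfl
  map_lie' := rfl

lemma qmk_surjective (I : LieIdeal k L) : Function.Surjective (qmk I) :=
  Quot.mk_surjective

lemma qmk_eq_zero {I : LieIdeal k L} {x : L} : qmk I x = 0 ↔ x ∈ I :=
  LieSubmodule.Quotient.mk_eq_zero'

/-- Lift a Lie hom through a quotient. -/
def qlift (I : LieIdeal k L) (f : L →ₗ⁅k⁆ M) (h : I ≤ f.ker) : (L ⧸ I) →ₗ⁅k⁆ M :=
  { Submodule.liftQ I.toSubmodule f.toLinearMap
      (fun x hx => LieHom.mem_ker.mp (h hx)) with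
    map_lie' := by
      rintro ⟨x⟩ ⟨y⟩
      exact f.map_lie x y }

@[simp] lemma qlift_qmk (I : LieIdeal k L) (f : L →ₗ⁅k⁆ M) (h : I ≤ f.ker) (x : L) :
    qlift I f h (qmk I x) = f x := rfl

/-- The derived ideal kills any Lie hom into a "pointwise abelian" target. -/
lemma derived_le_ker (f : L →ₗ⁅k⁆ M) (habs : ∀ x y : M, ⁅x, y⁆ = 0) :
    ⁅(⊤ : LieIdeal k L), (⊤ : LieIdeal k L)⁆ ≤ f.ker := by
  rw [LieSubmodule.lieIdeal_oper_eq_span, LieSubmodule.lieSpan_le]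
  rintro _ ⟨x, y, rfl⟩
  rw [SetLike.mem_coe, LieHom.mem_ker, LieHom.map_lie, habs]

lemma equiv_derived {L' : Type} [LieRing L'] [LieAlgebra k L'] (e : L ≃ₗ⁅k⁆ L')
    {w : L} (hw : w ∈ ⁅(⊤ : LieIdeal k L), (⊤ : LieIdeal k L)⁆) :
    e w ∈ ⁅(⊤ : LieIdeal k L'), (⊤ : LieIdeal k L')⁆ := by
  revert w
  suffices h : ⁅(⊤ : LieIdeal k L), (⊤ : LieIdeal k L)⁆ ≤
      LieIdeal.comap (e : L →ₗ⁅k⁆ L') ⁅(⊤ : LieIdeal k L'), (⊤ : LieIdeal k L')⁆ by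
    intro w hw; exact (LieIdeal.mem_comap).mp (h hw)
  rw [LieSubmodule.lieIdeal_oper_eq_span, LieSubmodule.lieSpan_le]
  rintro _ ⟨x, y, rfl⟩
  refine SetLike.mem_coe.mpr (LieIdeal.mem_comap.mpr ?_)
  rw [LieHom.map_lie]
  exact LieSubmodule.lie_mem_lie (LieSubmodule.mem_top _) (LieSubmodule.mem_top _)

end Quot

section BBdef
variable {J : Type} [Fintype J] [DecidableEq J]

/-- The bilinear form attached to a square matrix `C`. -/
def BB (C : Matrix J J k) (x y : J → k) : k :=
  ∑ p, ∑ q, C p q * (x p * y q - x q * y p)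

omit [DecidableEq J] in
lemma BB_skew (C : Matrix J J k) (x y : J → k) : BB C y x = -BB C x y := by
  simp only [BB, ← Finset.sum_neg_distrib]
  exact Finset.sum_congr rfl fun p _ => Finset.sum_congr rfl fun q _ => by ring

omit [DecidableEq J] in
lemma BB_self (C : Matrix J J k) (x : J → k) : BB C x x = 0 := by
  simp only [BB]
  apply Finset.sum_eq_zero; intro p _
  apply Finset.sum_eq_zero; intro q _
  ring

omit [DecidableEq J] in
lemma BB_add_right (C : Matrix J J k) (x y y' : J → k) :
    BB C x (y + y') = BB C x y + BB C x y' := by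
  simp only [BB, ← Finset.sum_add_distrib]
  exact Finset.sum_congr rfl fun p _ => Finset.sum_congr rfl fun q _ => by
    simp [Pi.add_apply]; ring

omit [DecidableEq J] in
lemma BB_add_left (C : Matrix J J k) (x x' y : J → k) :
    BB C (x + x') y = BB C x y + BB C x' y := by
  rw [BB_skew, BB_add_right, BB_skew C x y, BB_skew C x' y]; ring

omit [DecidableEq J] in
lemma BB_smul_right (C : Matrix J J k) (t : k) (x y : J → k) :
    BB C x (t • y) = t * BB C x y := by
  simp only [BB, Finset.mul_sum]
  exact Finset.sum_congr rfl fun p _ => Finset.sum_congr rfl fun q _ => by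
    simp [Pi.smul_apply, smul_eq_mul]; ring

omit [DecidableEq J] in
lemma BB_sub_matrix (C C' : Matrix J J k) (x y : J → k) :
    BB (C - C') x y = BB C x y - BB C' x y := by
  simp only [BB, ← Finset.sum_sub_distrib]
  exact Finset.sum_congr rfl fun p _ => Finset.sum_congr rfl fun q _ => by
    simp [Matrix.sub_apply]; ring

/-- An elementary matrix. -/
def E (p q : J) : Matrix J J k := Matrix.of fun a b => if a = p ∧ b = q then 1 else 0

lemma BB_E (p q : J) (x y : J → k) :
    BB (E p q) x y = x p * y q - x q * y p := by
  simp only [BB, E, Matrix.of_apply, ite_mul, one_mul, zero_mul]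
  rw [Finset.sum_eq_single p]
  · rw [Finset.sum_eq_single q]
    · simp
    · intro b _ hb; simp [hb]
    · simp
  · intro a _ ha
    apply Finset.sum_eq_zero; intro b _; simp [ha]
  · simp

lemma BB_single (C : Matrix J J k) (a b : J) :
    BB C (Pi.single a (1 : k)) (Pi.single b 1) = C a b - C b a := by
  have key : ∀ a b : J, (∑ p, ∑ q, C p q *
      ((Pi.single a 1 : J → k) p * (Pi.single b 1 : J → k) q)) = C a b := by
    intro a b
    rw [Finset.sum_eq_single a]
    · rw [Finset.sum_eq_single b]
      · simp
      · intro q _ hq; simp [Pi.single_apply, hq]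
      · simp
    · intro p _ hp
      apply Finset.sum_eq_zero; intro q _; simp [Pi.single_apply, hp]
    · simp
  have expand : BB C (Pi.single a (1 : k)) (Pi.single b 1) =
      (∑ p, ∑ q, C p q * ((Pi.single a 1 : J → k) p * (Pi.single b 1 : J → k) q)) -
      (∑ p, ∑ q, C p q * ((Pi.single b 1 : J → k) p * (Pi.single a 1 : J → k) q)) := by
    simp only [BB, ← Finset.sum_sub_distrib]
    exact Finset.sum_congr rfl fun p _ => Finset.sum_congr rfl fun q _ => by ring
  rw [expand, key, key]

end BBdef

section HeisDef
variable {J : Type} [Fintype J] [DecidableEq J]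

/-- The Heisenberg-type Lie algebra attached to the matrix `C`. -/
def Heis (k : Type) [Field k] (J : Type) [Fintype J] [DecidableEq J]
    (C : Matrix J J k) : Type := (J → k) × k

variable (C : Matrix J J k)

instance : AddCommGroup (Heis k J C) := inferInstanceAs (AddCommGroup ((J → k) × k))
instance : Module k (Heis k J C) := inferInstanceAs (Module k ((J → k) × k))

instance : LieRing (Heis k J C) where
  bracket x y := (0, BB C x.1 y.1)
  add_lie x y z := by
    show (_, _) = (_, _) + (_, _)
    refine Prod.ext (by show (0 : J → k) = 0 + 0; simp) ?_
    have h : (x + y).1 = x.1 + y.1 := rfl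
    rw [h, BB_add_left]; rfl
  lie_add x y z := by
    show (_, _) = (_, _) + (_, _)
    refine Prod.ext (by show (0 : J → k) = 0 + 0; simp) ?_
    have h : (y + z).1 = y.1 + z.1 := rfl
    rw [h, BB_add_right]; rfl
  lie_self x := by
    show (_, _) = (0 : Heis k J C)
    simp [Prod.ext_iff, BB_self]; rfl
  leibniz_lie x y z := by
    show (_, _) = (_, _) + (_, _)
    have h1 : BB C x.1 (0 : J → k) = 0 := by simp [BB]
    have h2 : BB C (0 : J → k) z.1 = 0 := by simp [BB]
    have h3 : BB C y.1 (0 : J → k) = 0 := by simp [BB]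
    simp only [Prod.ext_iff]
    constructor
    · show (0 : J → k) = 0 + 0; simp
    · show BB C x.1 (0 : J → k) = BB C (0:J→k) z.1 + BB C y.1 (0:J→k)
      rw [h1, h2, h3]; simp

instance : LieAlgebra k (Heis k J C) where
  lie_smul t x y := by
    show (_, _) = t • (_, _)
    refine Prod.ext (by show (0 : J → k) = t • 0; simp) ?_
    have h : (t • y).1 = t • y.1 := rfl
    rw [h, BB_smul_right]; rfl

lemma heis_bracket (x y : Heis k J C) : ⁅x, y⁆ = ((0 : J → k), BB C x.1 y.1) := rfl

/-- First projection from `Heis` as a Lie hom to the abelian algebra `J → k`. -/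
def heisProj : Heis k J C →ₗ⁅k⁆ (J → k) where
  toFun x := x.1
  map_add' _ _ := rfl
  map_smul' _ _ := rfl
  map_lie' {x y} := by
    show ((0 : J → k), BB C x.1 y.1).1 = ⁅x.1, y.1⁆
    rw [Ring.lie_def, mul_comm]; simp

end HeisDef

lemma pi_lie_zero {J : Type} (x y : J → k) : ⁅x, y⁆ = 0 := by
  rw [Ring.lie_def, mul_comm]; simp

end Stmt12

namespace Stmt12

section Main
variable (k : Type) [Field k] (n : ℕ) (X : Type)

open FreeLieAlgebra

lemma lie_map_sum {L M : Type} [LieRing L] [LieAlgebra k L] [LieRing M] [LieAlgebra k M]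
    {ι : Type} (f : L →ₗ⁅k⁆ M) (s : Finset ι) (g : ι → L) :
    f (∑ i ∈ s, g i) = ∑ i ∈ s, f (g i) := map_sum f.toLinearMap g s

/-- The surface relator. -/
noncomputable def relS : FreeLieAlgebra k (Fin n × Fin 2) :=
  ∑ i : Fin n, ⁅of k (i, (0 : Fin 2)), of k (i, (1 : Fin 2))⁆

/-- The surface relation ideal. -/
noncomputable def IS : LieIdeal k (FreeLieAlgebra k (Fin n × Fin 2)) :=
  LieSubmodule.lieSpan k (FreeLieAlgebra k (Fin n × Fin 2)) {relS k n}

/-- The free-product relator. -/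
noncomputable def relA : FreeLieAlgebra k (Bool ⊕ X) :=
  ⁅(of k (Sum.inl true) : FreeLieAlgebra k (Bool ⊕ X)), of k (Sum.inl false)⁆

/-- The free-product relation ideal. -/
noncomputable def IA : LieIdeal k (FreeLieAlgebra k (Bool ⊕ X)) :=
  LieSubmodule.lieSpan k (FreeLieAlgebra k (Bool ⊕ X)) {relA k X}

/-- Abelianization-to-`V` map on the free Lie algebra. -/
noncomputable def fpi : FreeLieAlgebra k (Fin n × Fin 2) →ₗ⁅k⁆ ((Fin n × Fin 2) → k) :=
  FreeLieAlgebra.lift k fun j => Pi.single j 1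

lemma fpi_rel : fpi k n (relS k n) = 0 := by
  rw [relS, lie_map_sum]
  apply Finset.sum_eq_zero; intro i _
  rw [LieHom.map_lie, pi_lie_zero]

/-- Abelianization of the surface Lie algebra. -/
noncomputable def piS : (FreeLieAlgebra k (Fin n × Fin 2) ⧸ IS k n) →ₗ⁅k⁆ ((Fin n × Fin 2) → k) :=
  qlift (IS k n) (fpi k n) (by
    rw [IS, LieSubmodule.lieSpan_le, Set.singleton_subset_iff]
    exact LieHom.mem_ker.mpr (fpi_rel k n))

/-- The trace condition. -/
noncomputable def T (C : Matrix (Fin n × Fin 2) (Fin n × Fin 2) k) : k :=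
  ∑ i : Fin n, (C (i, 0) (i, 1) - C (i, 1) (i, 0))

variable (C : Matrix (Fin n × Fin 2) (Fin n × Fin 2) k)

/-- Free-Lie-algebra-to-Heisenberg map. -/
noncomputable def fheis : FreeLieAlgebra k (Fin n × Fin 2) →ₗ⁅k⁆ Heis k (Fin n × Fin 2) C :=
  FreeLieAlgebra.lift k fun j => ((Pi.single j 1 : (Fin n × Fin 2) → k), (0 : k))

lemma fheis_rel (hC : T k n C = 0) : fheis k n C (relS k n) = 0 := by
  rw [relS, lie_map_sum]
  have h : ∀ i : Fin n, fheis k n C ⁅of k (i, (0:Fin 2)), of k (i, (1:Fin 2))⁆ =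
      (((0 : (Fin n × Fin 2) → k), C (i, 0) (i, 1) - C (i, 1) (i, 0)) :
        ((Fin n × Fin 2) → k) × k) := by
    intro i
    rw [LieHom.map_lie, fheis]
    erw [lift_of_apply, lift_of_apply]
    erw [heis_bracket]
    show (((0 : (Fin n × Fin 2) → k),
      BB C (Pi.single (i, (0:Fin 2)) 1) (Pi.single (i, (1:Fin 2)) 1)) : _ × _) = _
    rw [BB_single]
  rw [Finset.sum_congr rfl (fun i _ => h i)]
  show (∑ i : Fin n, (((0 : (Fin n × Fin 2) → k), C (i, 0) (i, 1) - C (i, 1) (i, 0)) :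
      ((Fin n × Fin 2) → k) × k)) = ((0 : (Fin n × Fin 2) → k), (0 : k))
  refine Prod.ext ?_ ?_
  · rw [Prod.fst_sum]; simp
  · rw [Prod.snd_sum]; exact hC

/-- Surface-Lie-algebra-to-Heisenberg map. -/
noncomputable def phiC (hC : T k n C = 0) :
    (FreeLieAlgebra k (Fin n × Fin 2) ⧸ IS k n) →ₗ⁅k⁆ Heis k (Fin n × Fin 2) C :=
  qlift (IS k n) (fheis k n C) (by
    rw [IS, LieSubmodule.lieSpan_le, Set.singleton_subset_iff]
    exact LieHom.mem_ker.mpr (fheis_rel k n C hC))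

lemma phiC_fst (hC : T k n C = 0) (w : FreeLieAlgebra k (Fin n × Fin 2) ⧸ IS k n) :
    (phiC k n C hC w).1 = piS k n w := by
  obtain ⟨x, rfl⟩ := qmk_surjective (IS k n) w
  rw [phiC, piS, qlift_qmk, qlift_qmk]
  have h : (heisProj C).comp (fheis k n C) = fpi k n := by
    apply FreeLieAlgebra.hom_ext
    intro j
    rw [LieHom.comp_apply, fheis, fpi]
    erw [lift_of_apply, lift_of_apply]
    rfl
  exact LieHom.congr_fun h x

/-- The derived ideal of the surface Lie algebra. -/
noncomputable def DS : LieIdeal k (FreeLieAlgebra k (Fin n × Fin 2) ⧸ IS k n) :=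
  ⁅(⊤ : LieIdeal k (FreeLieAlgebra k (Fin n × Fin 2) ⧸ IS k n)),
   (⊤ : LieIdeal k (FreeLieAlgebra k (Fin n × Fin 2) ⧸ IS k n))⁆

lemma mem_DS (w : FreeLieAlgebra k (Fin n × Fin 2) ⧸ IS k n) (h : piS k n w = 0) :
    w ∈ DS k n := by
  have habs : ∀ z w' : (FreeLieAlgebra k (Fin n × Fin 2) ⧸ IS k n) ⧸ DS k n,
      ⁅z, w'⁆ = 0 := by
    intro z w'
    obtain ⟨a, rfl⟩ := qmk_surjective (DS k n) z
    obtain ⟨b, rfl⟩ := qmk_surjective (DS k n) w'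
    rw [← LieHom.map_lie, qmk_eq_zero]
    show ⁅a, b⁆ ∈ ⁅(⊤ : LieIdeal k (FreeLieAlgebra k (Fin n × Fin 2) ⧸ IS k n)),
      (⊤ : LieIdeal k (FreeLieAlgebra k (Fin n × Fin 2) ⧸ IS k n))⁆
    exact LieSubmodule.lie_mem_lie (LieSubmodule.mem_top _) (LieSubmodule.mem_top _)
  let βl : ((Fin n × Fin 2) → k) →ₗ[k] ((FreeLieAlgebra k (Fin n × Fin 2) ⧸ IS k n) ⧸ DS k n) :=
    (Pi.basisFun k (Fin n × Fin 2)).constr k fun j => qmk (DS k n) (qmk (IS k n) (of k j))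
  let β : ((Fin n × Fin 2) → k) →ₗ⁅k⁆ ((FreeLieAlgebra k (Fin n × Fin 2) ⧸ IS k n) ⧸ DS k n) :=
    { βl with
      map_lie' := by
        intro x y
        show βl ⁅x, y⁆ = ⁅βl x, βl y⁆
        rw [pi_lie_zero, habs, map_zero] }
  have key : β.comp (piS k n) = qmk (DS k n) := by
    apply LieHom.ext
    intro w'
    obtain ⟨x, rfl⟩ := qmk_surjective (IS k n) w'
    have h2 : (β.comp (piS k n)).comp (qmk (IS k n)) = (qmk (DS k n)).comp (qmk (IS k n)) := by
      apply FreeLieAlgebra.hom_ext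
      intro j
      rw [LieHom.comp_apply, LieHom.comp_apply, LieHom.comp_apply, piS, qlift_qmk,
        fpi, lift_of_apply]
      show βl (Pi.single j 1) = qmk (DS k n) (qmk (IS k n) (of k j))
      rw [← Pi.basisFun_apply, Module.Basis.constr_basis]
    exact LieHom.congr_fun h2 x
  rw [← qmk_eq_zero (I := DS k n)]
  have : qmk (DS k n) w = β (piS k n w) := (LieHom.congr_fun key w).symm
  rw [this, h, map_zero]

/-- Abelianization map on the free-product side. -/
noncomputable def ftheta : FreeLieAlgebra k (Bool ⊕ X) →ₗ⁅k⁆ (Bool → k) :=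
  FreeLieAlgebra.lift k (Sum.elim (fun b => Pi.single b 1) fun _ => 0)

noncomputable def theta : (FreeLieAlgebra k (Bool ⊕ X) ⧸ IA k X) →ₗ⁅k⁆ (Bool → k) :=
  qlift (IA k X) (ftheta k X) (by
    rw [IA, LieSubmodule.lieSpan_le, Set.singleton_subset_iff]
    refine LieHom.mem_ker.mpr ?_
    rw [relA, LieHom.map_lie, pi_lie_zero])

end Main
end Stmt12

namespace Stmt12

section Fin2
variable (k : Type) [Field k] (n : ℕ)

lemma sum_ite_and {α : Type} [Fintype α] [DecidableEq α] (a b : α) :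
    (∑ i : α, if i = a ∧ i = b then (1:k) else 0) = if a = b then 1 else 0 := by
  rcases eq_or_ne a b with rfl | h
  · simp
  · rw [Finset.sum_eq_zero, if_neg h]
    intro i _
    have hi : ¬(i = a ∧ i = b) := by rintro ⟨rfl, rfl⟩; exact h rfl
    simp [hi]

lemma T_sub (C C' : Matrix (Fin n × Fin 2) (Fin n × Fin 2) k) :
    T k n (C - C') = T k n C - T k n C' := by
  simp only [T, Matrix.sub_apply, ← Finset.sum_sub_distrib]
  exact Finset.sum_congr rfl fun i _ => by ring

lemma T_E01 (a b : Fin n) :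
    T k n (E ((a, (0:Fin 2))) ((b, (1:Fin 2)))) = if a = b then 1 else 0 := by
  simp only [T, E, Matrix.of_apply, Prod.mk.injEq, and_true,
    show ((1:Fin 2) = 0) = False by decide, show ((0:Fin 2) = 1) = False by decide,
    and_false, false_and, if_false, sub_zero]
  exact sum_ite_and k a b

lemma T_E00 (a b : Fin n) :
    T k n (E ((a, (0:Fin 2))) ((b, (0:Fin 2)))) = 0 := by
  simp only [T, E, Matrix.of_apply, Prod.mk.injEq, and_true,
    show ((1:Fin 2) = 0) = False by decide, show ((0:Fin 2) = 1) = False by decide,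
    and_false, false_and, if_false, sub_zero]
  simp

lemma T_E11 (a b : Fin n) :
    T k n (E ((a, (1:Fin 2))) ((b, (1:Fin 2)))) = 0 := by
  simp only [T, E, Matrix.of_apply, Prod.mk.injEq, and_true,
    show ((1:Fin 2) = 0) = False by decide, show ((0:Fin 2) = 1) = False by decide,
    and_false, false_and, if_false, sub_zero]
  simp

lemma T_E10 (a b : Fin n) :
    T k n (E ((a, (1:Fin 2))) ((b, (0:Fin 2)))) = -(if a = b then 1 else 0) := by
  simp only [T, E, Matrix.of_apply, Prod.mk.injEq, and_true,
    show ((1:Fin 2) = 0) = False by decide, show ((0:Fin 2) = 1) = False by decide,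
    and_false, false_and, if_false, zero_sub]
  rw [Finset.sum_neg_distrib, sum_ite_and k a b]

end Fin2
end Stmt12

namespace Stmt12
open FreeLieAlgebra

theorem main (k : Type) [Field k] (n : ℕ) (X : Type) (hn : 2 ≤ n)
    (ψ : (FreeLieAlgebra k (Fin n × Fin 2) ⧸ IS k n) ≃ₗ⁅k⁆
         (FreeLieAlgebra k (Bool ⊕ X) ⧸ IA k X)) : False := by
  classical
  set A := qmk (IA k X) (of k (Sum.inl true)) with hAdef
  set Bb := qmk (IA k X) (of k (Sum.inl false)) with hBdef
  have hAB : ⁅A, Bb⁆ = 0 := by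
    rw [hAdef, hBdef, ← LieHom.map_lie, qmk_eq_zero]
    exact LieSubmodule.subset_lieSpan rfl
  set u := ψ.symm A with hudef
  set v := ψ.symm Bb with hvdef
  have huv : ⁅u, v⁆ = 0 := by
    have h1 : u = ψ.symm.toLieHom A := rfl
    have h2 : v = ψ.symm.toLieHom Bb := rfl
    rw [h1, h2, ← LieHom.map_lie, hAB, map_zero]
  set x := piS k n u with hxdef
  set y := piS k n v with hydef
  -- the vanishing of all admissible alternating forms on (x, y)
  have hBB : ∀ C, T k n C = 0 → BB C x y = 0 := by
    intro C hC
    have h0 : ⁅phiC k n C hC u, phiC k n C hC v⁆ = 0 := by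
      rw [← LieHom.map_lie, huv, map_zero]
    rw [heis_bracket] at h0
    have h1 : BB C (phiC k n C hC u).1 (phiC k n C hC v).1 = 0 := congrArg Prod.snd h0
    rw [phiC_fst k n C hC u, phiC_fst k n C hC v] at h1
    exact h1
  have hE : ∀ p q : Fin n × Fin 2, T k n (E p q) = 0 → x p * y q - x q * y p = 0 := by
    intro p q h
    rw [← BB_E p q x y]
    exact hBB _ h
  -- all conjugate minors are equal
  have hsame : ∀ i j : Fin n,
      x (i, 0) * y (i, 1) - x (i, 1) * y (i, 0) =
      x (j, 0) * y (j, 1) - x (j, 1) * y (j, 0) := by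
    intro i j
    have hT : T k n (E (i, (0:Fin 2)) (i, (1:Fin 2)) - E (j, (0:Fin 2)) (j, (1:Fin 2))) = 0 := by
      rw [T_sub, T_E01, T_E01]; simp
    have h := hBB _ hT
    rw [BB_sub_matrix, BB_E, BB_E] at h
    linear_combination h
  set i0 : Fin n := ⟨0, by omega⟩ with hi0
  set i1 : Fin n := ⟨1, by omega⟩ with hi1
  have hne : i0 ≠ i1 := by
    intro h; rw [hi0, hi1, Fin.mk.injEq] at h; omega
  set c := x (i0, 0) * y (i0, 1) - x (i0, 1) * y (i0, 0) with hcdef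
  -- the common value of the conjugate minors is zero
  have hc0 : c = 0 := by
    by_contra hc
    have e1 := hE (i0, 0) (i1, 0) (T_E00 k n i0 i1)
    have e2 := hE (i0, 1) (i1, 0) (by rw [T_E10, if_neg hne, neg_zero])
    have e3 := hE (i0, 0) (i1, 1) (by rw [T_E01, if_neg hne])
    have e4 := hE (i0, 1) (i1, 1) (T_E11 k n i0 i1)
    have hxr : x (i1, 0) * c = 0 := by
      rw [hcdef]; linear_combination x (i0, 1) * e1 - x (i0, 0) * e2
    have hyr : y (i1, 0) * c = 0 := by
      rw [hcdef]; linear_combination y (i0, 1) * e1 - y (i0, 0) * e2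
    have hxs : x (i1, 1) * c = 0 := by
      rw [hcdef]; linear_combination x (i0, 1) * e3 - x (i0, 0) * e4
    have hys : y (i1, 1) * c = 0 := by
      rw [hcdef]; linear_combination y (i0, 1) * e3 - y (i0, 0) * e4
    have hxr0 : x (i1, 0) = 0 := by rcases mul_eq_zero.mp hxr with h | h; exact h; exact absurd h hc
    have hyr0 : y (i1, 0) = 0 := by rcases mul_eq_zero.mp hyr with h | h; exact h; exact absurd h hc
    have hxs0 : x (i1, 1) = 0 := by rcases mul_eq_zero.mp hxs with h | h; exact h; exact absurd h hc
    have hys0 : y (i1, 1) = 0 := by rcases mul_eq_zero.mp hys with h | h; exact h; exact absurd h hc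
    have : c = 0 := by
      rw [hcdef, hsame i0 i1, hxr0, hyr0, hxs0, hys0]; ring
    exact hc this
  have hmi : ∀ i : Fin n, x (i, 0) * y (i, 1) - x (i, 1) * y (i, 0) = 0 := by
    intro i; rw [hsame i i0, ← hcdef, hc0]
  -- all two-by-two minors vanish
  have hm : ∀ a b : Fin n × Fin 2, x a * y b - x b * y a = 0 := by
    rintro ⟨a1, a2⟩ ⟨b1, b2⟩
    fin_cases a2 <;> fin_cases b2 <;> simp only [Fin.mk_zero, Fin.mk_one]
    · exact hE (a1, 0) (b1, 0) (T_E00 k n a1 b1)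
    · rcases eq_or_ne a1 b1 with rfl | h
      · exact hmi a1
      · exact hE (a1, 0) (b1, 1) (by rw [T_E01, if_neg h])
    · rcases eq_or_ne a1 b1 with rfl | h
      · have h5 := hmi a1; linear_combination -h5
      · exact hE (a1, 1) (b1, 0) (by rw [T_E10, if_neg h, neg_zero])
    · exact hE (a1, 1) (b1, 1) (T_E11 k n a1 b1)
  -- x and y are linearly dependent
  obtain ⟨α, β, hαβ, hdep⟩ :
      ∃ α β : k, ¬(α = 0 ∧ β = 0) ∧ α • x + β • y = 0 := by
    by_cases hx : x = 0
    · exact ⟨1, 0, by simp, by simp [hx]⟩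
    · obtain ⟨a, ha⟩ := Function.ne_iff.mp hx
      refine ⟨y a, -(x a), fun h => ha ?_, funext fun b => ?_⟩
      · have := h.2; rw [neg_eq_zero] at this; exact this
      · have := hm a b
        show y a * x b + -(x a) * y b = 0
        linear_combination -this
  -- transport to the free-product side and contradict
  have hw : piS k n (α • u + β • v) = 0 := by
    rw [map_add, map_smul, map_smul, ← hxdef, ← hydef, hdep]
  have hwD : (α • u + β • v) ∈
      ⁅(⊤ : LieIdeal k (FreeLieAlgebra k (Fin n × Fin 2) ⧸ IS k n)),
       (⊤ : LieIdeal k (FreeLieAlgebra k (Fin n × Fin 2) ⧸ IS k n))⁆ :=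
    mem_DS k n _ hw
  have hψD : ψ (α • u + β • v) ∈
      ⁅(⊤ : LieIdeal k (FreeLieAlgebra k (Bool ⊕ X) ⧸ IA k X)),
       (⊤ : LieIdeal k (FreeLieAlgebra k (Bool ⊕ X) ⧸ IA k X))⁆ :=
    equiv_derived ψ hwD
  have hθ0 : theta k X (ψ (α • u + β • v)) = 0 :=
    LieHom.mem_ker.mp (derived_le_ker (theta k X) (fun a b => pi_lie_zero a b) hψD)
  have hψw : ψ (α • u + β • v) = α • A + β • Bb := by
    have h1 : ψ (α • u + β • v) = ψ.toLieHom (α • u + β • v) := rfl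
    rw [h1, map_add, map_smul, map_smul]
    have h2 : ψ.toLieHom u = A := by rw [hudef]; exact ψ.apply_symm_apply A
    have h3 : ψ.toLieHom v = Bb := by rw [hvdef]; exact ψ.apply_symm_apply Bb
    rw [h2, h3]
  have hA' : theta k X A = Pi.single true 1 := by
    rw [hAdef, theta, qlift_qmk, ftheta, lift_of_apply]
    rfl
  have hB' : theta k X Bb = Pi.single false 1 := by
    rw [hBdef, theta, qlift_qmk, ftheta, lift_of_apply]
    rfl
  rw [hψw, map_add, map_smul, map_smul, hA', hB'] at hθ0
  have h1 := congrFun hθ0 true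
  have h2 := congrFun hθ0 false
  simp [Pi.single_apply] at h1 h2
  exact hαβ ⟨h1, h2⟩

end Stmt12

end AssocLie

/-- for `n ≥ 2`, the one-relator Lie algebra
`⟨x₁,y₁,…,xₙ,yₙ ∣ [x₁,y₁]+⋯+[xₙ,yₙ]⟩` is not isomorphic to the free product of a
2-dimensional abelian Lie algebra and a free Lie algebra. -/
theorem stmt12 (k : Type) [Field k] (n : ℕ) (hn : 2 ≤ n) (X : Type) :
    IsEmpty (surfaceLie k n ≃ₗ⁅k⁆ abelianFreeProd k X) := by
  exact ⟨fun ψ => Stmt12.main k n X hn ψ⟩
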